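/- arXiv:2411.14015 — 2 statements merged into one kernel-verified Lean document; each statement's English description precedes it below -/
import Mathlib

section
/- Landen's identity: for z not in the lattice (½)ℤ + (τ/2)ℤ, the derivative of the Weierstrass function satisfies ℘′(z, τ/2) = ℘′(z, τ) + ℘′(z + τ/2, τ). -/
open Complex

noncomputable section

open EisensteinSeries in
lemma summable_wp_aux (τ z : ℂ) (hτ : 0 < τ.im) :
    Summable fun p : ℤ × ℤ => 1 / (z + (p.1 : ℂ) + (p.2 : ℂ) * τ) ^ 3 := by
  set ht : UpperHalfPlane := ⟨τ, hτ⟩ with hht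
  have hr : 0 < r ht := r_pos ht
  obtain ⟨N, hN⟩ := exists_nat_ge (2 * ‖z‖ / r ht)
  have hg : Summable fun p : ℤ × ℤ => (2 / r ht) ^ 3 * ‖![(p.2 : ℤ), p.1]‖ ^ (-(3 : ℝ)) := by
    apply Summable.mul_left
    have h0 : Summable fun x : Fin 2 → ℤ => ‖x‖ ^ (-(3 : ℝ)) :=
      summable_one_div_norm_rpow (by norm_num)
    have h2 := ((finTwoArrowEquiv ℤ).symm.summable_iff
      (f := fun x : Fin 2 → ℤ => ‖x‖ ^ (-(3 : ℝ)))).2 h0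
    have h3 := ((Equiv.prodComm ℤ ℤ).summable_iff
      (f := fun p : ℤ × ℤ => ‖(finTwoArrowEquiv ℤ).symm p‖ ^ (-(3 : ℝ)))).2 h2
    exact h3.congr fun p => by simp [finTwoArrowEquiv, Function.comp]
  apply Summable.of_norm_bounded_eventually hg
  rw [Filter.eventually_cofinite]
  apply Set.Finite.subset (((Set.finite_Icc (-(N : ℤ)) N).prod (Set.finite_Icc (-(N : ℤ)) N)))
  intro p hp
  simp only [Set.mem_setOf_eq, not_le] at hp
  by_contra hbox
  refine absurd hp (not_lt.mpr ?_)
  -- p is outside the box, so ‖![p.2, p.1]‖ > N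
  set x : Fin 2 → ℤ := ![(p.2 : ℤ), p.1] with hx
  have hx0 : x 0 = p.2 := rfl
  have hx1 : x 1 = p.1 := rfl
  have hnormx : ‖x‖ = max (p.2).natAbs (p.1).natAbs := by
    rw [norm_eq_max_natAbs, hx0, hx1]
  have hbig : (N : ℝ) < ‖x‖ := by
    simp only [Set.mem_prod, Set.mem_Icc, not_and_or, not_le] at hbox
    rw [hnormx]
    have : (N : ℤ) < max (p.2).natAbs (p.1).natAbs := by
      rcases hbox with h | h <;> omega
    exact_mod_cast this
  have hxne : x ≠ 0 := by
    intro h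
    rw [h, norm_zero] at hbig
    exact absurd hbig (not_lt.mpr (Nat.cast_nonneg N))
  have hMpos : (0 : ℝ) < ‖x‖ := lt_of_le_of_lt (Nat.cast_nonneg N) hbig
  -- lower bound on the denominator
  have hlin : r ht * ‖x‖ ≤ ‖(p.2 : ℂ) * τ + p.1‖ := by
    have := r_mul_max_le ht hxne
    simpa [hx0, hx1, hht] using this
  have hzle : ‖z‖ ≤ r ht * ‖x‖ / 2 := by
    have h1 : 2 * ‖z‖ ≤ r ht * N := by
      rw [div_le_iff₀ hr] at hN
      linarith [hN]
    have h2 : r ht * (N : ℝ) ≤ r ht * ‖x‖ := by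
      apply mul_le_mul_of_nonneg_left hbig.le hr.le
    linarith
  have hdenom : r ht * ‖x‖ / 2 ≤ ‖z + (p.1 : ℂ) + (p.2 : ℂ) * τ‖ := by
    have h3 : ‖(p.2 : ℂ) * τ + p.1‖ - ‖z‖
        ≤ ‖z + (p.1 : ℂ) + (p.2 : ℂ) * τ‖ := by
      have h := norm_sub_norm_le ((p.2 : ℂ) * τ + (p.1 : ℂ)) (-z)
      simp only [norm_neg, sub_neg_eq_add] at h
      rwa [show (p.2 : ℂ) * τ + (p.1 : ℂ) + z = z + (p.1 : ℂ) + (p.2 : ℂ) * τ by ring] at h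
    linarith
  have hdpos : (0 : ℝ) < r ht * ‖x‖ / 2 := by positivity
  -- conclude the bound
  have hrn : ‖(1 : ℂ) / (z + (p.1 : ℂ) + (p.2 : ℂ) * τ) ^ 3‖
      = 1 / ‖z + (p.1 : ℂ) + (p.2 : ℂ) * τ‖ ^ 3 := by
    simp [map_pow]
  rw [hrn]
  have hrpow : ‖x‖ ^ (-(3 : ℝ)) = 1 / ‖x‖ ^ (3 : ℕ) := by
    rw [Real.rpow_neg hMpos.le, one_div]
    congr 1
    rw [← Real.rpow_natCast ‖x‖ 3]
    norm_num
  rw [hrpow]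
  have hApos : (0 : ℝ) < ‖z + (p.1 : ℂ) + (p.2 : ℂ) * τ‖ := lt_of_lt_of_le hdpos hdenom
  rw [mul_one_div, div_le_div_iff₀ (by positivity) (by positivity), one_mul]
  calc ‖x‖ ^ (3 : ℕ) = (2 / r ht) ^ 3 * (r ht * ‖x‖ / 2) ^ 3 := by
        field_simp
    _ ≤ (2 / r ht) ^ 3 * ‖z + (p.1 : ℂ) + (p.2 : ℂ) * τ‖ ^ 3 := by
        gcongr

/-- The derivative of the Weierstrass ℘-function for the lattice `ℤ + τℤ`:
`℘′(z, τ) = −2 ∑_{(m,n) ∈ ℤ²} 1/(z+m+nτ)³`. -/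
def wpT' (τ z : ℂ) : ℂ :=
  -2 * ∑' p : ℤ × ℤ, 1 / (z + (p.1 : ℂ) + (p.2 : ℂ) * τ) ^ 3

/-- Landen's identity for the derivative of the Weierstrass function:
`℘′(z, τ/2) = ℘′(z, τ) + ℘′(z + τ/2, τ)` for `z ∉ (½)ℤ + (τ/2)ℤ`. -/
theorem landen_wp_deriv (τ z : ℂ) (hτ : 0 < τ.im)
    (hz : ∀ m n : ℤ, z ≠ (m : ℂ) / 2 + (n : ℂ) * τ / 2) :
    wpT' (τ / 2) z = wpT' τ z + wpT' τ (z + τ / 2) := by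
  classical
  set g : ℤ × ℤ → ℂ := fun p => 1 / (z + (p.1 : ℂ) + (p.2 : ℂ) * (τ / 2)) ^ 3 with hg
  set f₁ : ℤ × ℤ → ℂ := fun p => 1 / (z + (p.1 : ℂ) + (p.2 : ℂ) * τ) ^ 3 with hf₁
  set f₂ : ℤ × ℤ → ℂ := fun p => 1 / (z + τ / 2 + (p.1 : ℂ) + (p.2 : ℂ) * τ) ^ 3 with hf₂
  have hs₁ : HasSum f₁ (∑' p, f₁ p) := (summable_wp_aux τ z hτ).hasSum
  have hs₂ : HasSum f₂ (∑' p, f₂ p) := by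
    have := (summable_wp_aux τ (z + τ / 2) hτ).hasSum
    exact this
  set i₁ : ℤ × ℤ → ℤ × ℤ := fun p => (p.1, 2 * p.2) with hi₁
  set i₂ : ℤ × ℤ → ℤ × ℤ := fun p => (p.1, 2 * p.2 + 1) with hi₂
  have hinj₁ : Function.Injective i₁ := by
    intro p q h
    simp only [hi₁, Prod.ext_iff] at h ⊢
    exact ⟨h.1, by omega⟩
  have hinj₂ : Function.Injective i₂ := by
    intro p q h
    simp only [hi₂, Prod.ext_iff] at h ⊢
    exact ⟨h.1, by omega⟩
  have hcompl : Set.range i₂ = (Set.range i₁)ᶜ := by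
    ext p
    simp only [Set.mem_range, Set.mem_compl_iff, hi₁, hi₂, Prod.ext_iff, not_exists]
    constructor
    · rintro ⟨q, hq1, hq2⟩ q' ⟨hq1', hq2'⟩
      omega
    · intro h
      rcases Int.even_or_odd p.2 with ⟨k, hk⟩ | ⟨k, hk⟩
      · exact absurd ⟨rfl, by omega⟩ (h (p.1, k))
      · exact ⟨(p.1, k), rfl, by omega⟩
  -- g ∘ i₁ = f₁ and g ∘ i₂ = f₂
  have hgi₁ : ∀ p : ℤ × ℤ, g (i₁ p) = f₁ p := by
    intro p
    simp only [hg, hf₁, hi₁]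
    push_cast
    ring_nf
  have hgi₂ : ∀ p : ℤ × ℤ, g (i₂ p) = f₂ p := by
    intro p
    simp only [hg, hf₂, hi₂]
    push_cast
    ring_nf
  -- transfer HasSum to the subtypes
  have hsub₁ : HasSum (g ∘ (↑) : Set.range i₁ → ℂ) (∑' p, f₁ p) := by
    rw [← (Equiv.ofInjective i₁ hinj₁).hasSum_iff]
    exact hs₁.congr_fun fun p => by
      simp only [Function.comp_apply, Equiv.ofInjective_apply]; exact hgi₁ p
  have hsub₂ : HasSum (g ∘ (↑) : ((Set.range i₁)ᶜ : Set (ℤ × ℤ)) → ℂ) (∑' p, f₂ p) := by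
    rw [← hcompl, ← (Equiv.ofInjective i₂ hinj₂).hasSum_iff]
    exact hs₂.congr_fun fun p => by
      simp only [Function.comp_apply, Equiv.ofInjective_apply]; exact hgi₂ p
  have hgsum : HasSum g (∑' p, f₁ p + ∑' p, f₂ p) := hsub₁.add_compl hsub₂
  have hgt : ∑' p, g p = ∑' p, f₁ p + ∑' p, f₂ p := hgsum.tsum_eq
  simp only [wpT', ← hg, ← hf₁, ← hf₂, hgt]
  ring
end
end

section
/- Landen's identity for the Weierstrass function: ℘(z, τ/2) = ℘(z, τ) + ℘(z + τ/2, τ) − ℘(τ/2, τ), for z not in the lattice ℤ + (τ/2)ℤ. -/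
open Complex

noncomputable section

/-- The Weierstrass ℘-function for the lattice `ℤ + τℤ`:
`℘(z,τ) = 1/z² + ∑_{(m,n)≠(0,0)} (1/(z+m+nτ)² − 1/(m+nτ)²)`. -/
def wpT (τ z : ℂ) : ℂ :=
  1 / z ^ 2 + ∑' p : {p : ℤ × ℤ // p ≠ 0},
    (1 / (z + (p.1.1 : ℂ) + (p.1.2 : ℂ) * τ) ^ 2 - 1 / ((p.1.1 : ℂ) + (p.1.2 : ℂ) * τ) ^ 2)

open EisensteinSeries Filter in
lemma wp_summable (τ : ℂ) (hτ : 0 < τ.im) (z : ℂ) :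
    Summable (fun q : ℤ × ℤ =>
      1 / (z + (q.1 : ℂ) + (q.2 : ℂ) * τ) ^ 2 - 1 / ((q.1 : ℂ) + (q.2 : ℂ) * τ) ^ 2) := by
  set t : UpperHalfPlane := ⟨τ, hτ⟩ with htdef
  have ht : (t : ℂ) = τ := rfl
  have hr : 0 < r t := r_pos t
  rw [← Equiv.summable_iff ((piFinTwoEquiv fun _ => ℤ).trans (Equiv.prodComm ℤ ℤ))]
  have hsum : Summable fun x : Fin 2 → ℤ =>
      (12 * ‖z‖ / r t ^ 3) * ‖x‖ ^ (-(3:ℝ)) :=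
    (summable_one_div_norm_rpow (by norm_num : (2:ℝ) < 3)).mul_left _
  apply Summable.of_norm_bounded_eventually hsum
  have hev1 : ∀ᶠ x : Fin 2 → ℤ in cofinite, x ≠ 0 := eventually_cofinite_ne 0
  have htends : Tendsto (fun x : Fin 2 → ℤ => ‖x‖) cofinite atTop := by
    rw [← cocompact_eq_cofinite]
    exact tendsto_norm_cocompact_atTop
  have hev2 : ∀ᶠ x : Fin 2 → ℤ in cofinite,
      (2 * ‖z‖ + 1) / r t ≤ ‖x‖ := htends.eventually_ge_atTop _
  filter_upwards [hev1, hev2] with x hx0 hxn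
  have hxpos : (0:ℝ) < ‖x‖ := norm_pos_iff.mpr hx0
  set w : ℂ := (x 0 : ℂ) * τ + (x 1 : ℂ) with hw
  have hrx : r t * ‖x‖ ≤ ‖w‖ := by
    simpa [ht] using r_mul_max_le (z := t) hx0
  have h2 : 2 * ‖z‖ + 1 ≤ r t * ‖x‖ := by
    have := (div_le_iff₀ hr).mp hxn
    nlinarith
  have hwb : 2 * ‖z‖ + 1 ≤ ‖w‖ := le_trans h2 hrx
  have haz : 0 ≤ ‖z‖ := norm_nonneg z
  have hb0 : 0 < ‖w‖ := by linarith
  have htri : ‖w‖ ≤ ‖z + w‖ + ‖z‖ := by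
    calc ‖w‖ = ‖(z + w) + (-z)‖ := by ring_nf
    _ ≤ ‖z + w‖ + ‖-z‖ := norm_add_le _ _
    _ = ‖z + w‖ + ‖z‖ := by rw [norm_neg]
  have hzw : ‖w‖ / 2 ≤ ‖z + w‖ := by linarith
  have hzwpos : 0 < ‖z + w‖ := by linarith
  have hzw0 : z + w ≠ 0 := by
    intro h; rw [h] at hzwpos; simp at hzwpos
  have hwne : w ≠ 0 := by
    intro h; rw [h] at hb0; simp at hb0
  have e1 : z + ((x 1 : ℤ) : ℂ) + ((x 0 : ℤ) : ℂ) * τ = z + w := by rw [hw]; ring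
  have e2 : ((x 1 : ℤ) : ℂ) + ((x 0 : ℤ) : ℂ) * τ = w := by rw [hw]; ring
  have key : 1 / (z + ((x 1 : ℤ) : ℂ) + ((x 0 : ℤ) : ℂ) * τ) ^ 2
      - 1 / (((x 1 : ℤ) : ℂ) + ((x 0 : ℤ) : ℂ) * τ) ^ 2
      = -(z * (2 * w + z)) / ((z + w) ^ 2 * w ^ 2) := by
    rw [e1, e2]; field_simp; ring
  simp only [Function.comp_apply, Equiv.trans_apply, piFinTwoEquiv_apply,
    Equiv.prodComm_apply, Prod.swap_prod_mk]
  rw [key]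
  have hnorm : ‖-(z * (2 * w + z)) / ((z + w) ^ 2 * w ^ 2)‖
      = ‖z‖ * ‖2 * w + z‖
        / (‖z + w‖ ^ 2 * ‖w‖ ^ 2) := by
    rw [norm_div, norm_neg, norm_mul, norm_mul, norm_pow, norm_pow]
  rw [hnorm]
  have h3b : ‖2 * w + z‖ ≤ 3 * ‖w‖ := by
    calc ‖2 * w + z‖ ≤ ‖2 * w‖ + ‖z‖ :=
      norm_add_le _ _
    _ = 2 * ‖w‖ + ‖z‖ := by rw [norm_mul]; simp
    _ ≤ 3 * ‖w‖ := by linarith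
  have step1 : ‖z‖ * ‖2 * w + z‖
      / (‖z + w‖ ^ 2 * ‖w‖ ^ 2)
      ≤ ‖z‖ * (3 * ‖w‖)
      / ((‖w‖ / 2) ^ 2 * ‖w‖ ^ 2) := by
    apply div_le_div₀ (by positivity)
      (mul_le_mul_of_nonneg_left h3b haz) (by positivity)
      (mul_le_mul_of_nonneg_right (by nlinarith) (by positivity))
  have step2 : ‖z‖ * (3 * ‖w‖)
      / ((‖w‖ / 2) ^ 2 * ‖w‖ ^ 2)
      = 12 * ‖z‖ / ‖w‖ ^ 3 := by
    field_simp; ring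
  have step3 : 12 * ‖z‖ / ‖w‖ ^ 3
      ≤ 12 * ‖z‖ / (r t * ‖x‖) ^ 3 := by
    gcongr
  have hrpow : ‖x‖ ^ (-(3:ℝ)) = (‖x‖ ^ (3:ℕ))⁻¹ := by
    rw [Real.rpow_neg (norm_nonneg x), ← Real.rpow_natCast ‖x‖ 3]
    norm_num
  have step4 : 12 * ‖z‖ / (r t * ‖x‖) ^ 3
      = (12 * ‖z‖ / r t ^ 3) * ‖x‖ ^ (-(3:ℝ)) := by
    rw [hrpow, mul_pow]
    field_simp
  linarith [step1, step3]

private def evenEquiv : (ℤ × ℤ) ≃ {q : ℤ × ℤ // 2 ∣ q.2} where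
  toFun p := ⟨(p.1, 2 * p.2), ⟨p.2, rfl⟩⟩
  invFun q := (q.1.1, q.1.2 / 2)
  left_inv p := by cases p; simp [Prod.ext_iff]; try omega
  right_inv q := by
    rcases q with ⟨⟨m, n⟩, hq⟩
    exact Subtype.ext (by simp [Prod.ext_iff]; try omega)

private def oddEquiv : (ℤ × ℤ) ≃ {q : ℤ × ℤ // ¬ 2 ∣ q.2} where
  toFun p := ⟨(p.1, 2 * p.2 + 1), by omega⟩
  invFun q := (q.1.1, q.1.2 / 2)
  left_inv p := by cases p; simp [Prod.ext_iff]; try omega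
  right_inv q := by
    rcases q with ⟨⟨m, n⟩, hq⟩
    exact Subtype.ext (by simp [Prod.ext_iff]; try omega)

lemma wpT_eq_tsum (τ z : ℂ)
    (h : Summable (fun q : ℤ × ℤ =>
      1 / (z + (q.1 : ℂ) + (q.2 : ℂ) * τ) ^ 2 - 1 / ((q.1 : ℂ) + (q.2 : ℂ) * τ) ^ 2)) :
    wpT τ z = ∑' q : ℤ × ℤ,
      (1 / (z + (q.1 : ℂ) + (q.2 : ℂ) * τ) ^ 2 - 1 / ((q.1 : ℂ) + (q.2 : ℂ) * τ) ^ 2) := by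
  set f : ℤ × ℤ → ℂ := fun q =>
    1 / (z + (q.1 : ℂ) + (q.2 : ℂ) * τ) ^ 2 - 1 / ((q.1 : ℂ) + (q.2 : ℂ) * τ) ^ 2 with hf
  have h1 : (∑' p : {p : ℤ × ℤ // p ≠ 0}, f p.1)
      = ∑' p : ↑(({0} : Set (ℤ × ℤ))ᶜ), f p.1 := by
    apply tsum_congr_subtype
    simp
  have h2 := Summable.tsum_add_tsum_compl (f := f) (s := ({0} : Set (ℤ × ℤ)))
    (h.subtype _) (h.subtype _)
  rw [tsum_singleton] at h2
  have f0 : f 0 = 1 / z ^ 2 := by simp [hf]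
  rw [f0] at h2
  calc wpT τ z = 1 / z ^ 2 + ∑' p : {p : ℤ × ℤ // p ≠ 0}, f p.1 := rfl
  _ = 1 / z ^ 2 + ∑' p : ↑(({0} : Set (ℤ × ℤ))ᶜ), f p.1 := by rw [h1]
  _ = ∑' q : ℤ × ℤ, f q := h2

/-- Landen's identity for the Weierstrass function:
`℘(z, τ/2) = ℘(z, τ) + ℘(z + τ/2, τ) − ℘(τ/2, τ)` for `z ∉ ℤ + (τ/2)ℤ`. -/
theorem landen_wp (τ z : ℂ) (hτ : 0 < τ.im)
    (hz : ∀ m n : ℤ, z ≠ (m : ℂ) + (n : ℂ) * τ / 2) :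
    wpT (τ / 2) z = wpT τ z + wpT τ (z + τ / 2) - wpT τ (τ / 2) := by
  have hτ2 : 0 < (τ / 2).im := by
    rw [Complex.div_im]
    simp
    positivity
  have hF := wp_summable (τ / 2) hτ2 z
  have hA := wp_summable τ hτ z
  have hB := wp_summable τ hτ (z + τ / 2)
  have hC := wp_summable τ hτ (τ / 2)
  rw [wpT_eq_tsum _ _ hF, wpT_eq_tsum _ _ hA, wpT_eq_tsum _ _ hB, wpT_eq_tsum _ _ hC]
  set F : ℤ × ℤ → ℂ := fun q =>
    1 / (z + (q.1 : ℂ) + (q.2 : ℂ) * (τ / 2)) ^ 2 - 1 / ((q.1 : ℂ) + (q.2 : ℂ) * (τ / 2)) ^ 2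
    with hFdef
  set s : Set (ℤ × ℤ) := {q | 2 ∣ q.2} with hs
  have hsplit := Summable.tsum_add_tsum_compl (f := F) (s := s) (hF.subtype _) (hF.subtype _)
  have hEven : (∑' q : ↑s, F q.1)
      = ∑' q : ℤ × ℤ, (1 / (z + (q.1 : ℂ) + (q.2 : ℂ) * τ) ^ 2
          - 1 / ((q.1 : ℂ) + (q.2 : ℂ) * τ) ^ 2) := by
    rw [tsum_congr_subtype F (show ∀ q : ℤ × ℤ, q ∈ s ↔ 2 ∣ q.2 from fun q => Iff.rfl),
      ← Equiv.tsum_eq evenEquiv]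
    apply tsum_congr
    intro q
    have hq : ((evenEquiv q : {q : ℤ × ℤ // 2 ∣ q.2}) : ℤ × ℤ) = (q.1, 2 * q.2) := rfl
    rw [hq, hFdef]
    push_cast
    ring
  have hOdd : (∑' q : ↑sᶜ, F q.1)
      = (∑' q : ℤ × ℤ, (1 / (z + τ / 2 + (q.1 : ℂ) + (q.2 : ℂ) * τ) ^ 2
          - 1 / ((q.1 : ℂ) + (q.2 : ℂ) * τ) ^ 2))
      - ∑' q : ℤ × ℤ, (1 / (τ / 2 + (q.1 : ℂ) + (q.2 : ℂ) * τ) ^ 2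
          - 1 / ((q.1 : ℂ) + (q.2 : ℂ) * τ) ^ 2) := by
    rw [tsum_congr_subtype F (show ∀ q : ℤ × ℤ, q ∈ sᶜ ↔ ¬ 2 ∣ q.2 from fun q => Iff.rfl),
      ← Equiv.tsum_eq oddEquiv, ← Summable.tsum_sub hB hC]
    apply tsum_congr
    intro q
    have hq : ((oddEquiv q : {q : ℤ × ℤ // ¬ 2 ∣ q.2}) : ℤ × ℤ) = (q.1, 2 * q.2 + 1) := rfl
    rw [hq, hFdef]
    push_cast
    ring
  rw [← hsplit, hEven, hOdd]
  ring
end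
end
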